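/- The element r = a₁ N∧A₊ in h₆⊗h₆ is a skew-symmetric solution of the classical Yang–Baxter equation: [r₁₂,r₁₃] + [r₁₂,r₂₃] + [r₁₃,r₂₃] = 0. -/
import Mathlib


open TensorProduct

/-- `r = a₁ N∧A₊` is a skew-symmetric solution of the classical Yang–Baxter
equation. Here the identity is proved universally: in any associative algebra
(e.g. the universal enveloping algebra of the two-photon algebra `h₆`)
containing elements `N, A₊` with `[N, A₊] = A₊`, the Schouten bracket of
`r = a₁ (N⊗A₊ − A₊⊗N)` vanishes in the triple tensor product. -/
theorem r_N_wedge_Ap_solves_CYBE (A : Type*) [Ring A] [Algebra ℝ A]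
    (a₁ : ℝ) (N Ap : A) (h : ⁅N, Ap⁆ = Ap) :
    let t : A → A → A → (A ⊗[ℝ] (A ⊗[ℝ] A)) := fun x y z => x ⊗ₜ[ℝ] (y ⊗ₜ[ℝ] z)
    let r₁₂ := a₁ • (t N Ap 1 - t Ap N 1)
    let r₁₃ := a₁ • (t N 1 Ap - t Ap 1 N)
    let r₂₃ := a₁ • (t 1 N Ap - t 1 Ap N)
    ⁅r₁₂, r₁₃⁆ + ⁅r₁₂, r₂₃⁆ + ⁅r₁₃, r₂₃⁆ = 0 := by
  intro t r12 r13 r23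
  have hNA : N * Ap = Ap + Ap * N := by rw [Ring.lie_def, sub_eq_iff_eq_add] at h; exact h
  simp only [t, r12, r13, r23, Ring.lie_def, smul_sub, sub_mul, mul_sub, smul_mul_smul_comm,
    Algebra.TensorProduct.tmul_mul_tmul, mul_one, one_mul, hNA]
  simp only [TensorProduct.add_tmul, TensorProduct.tmul_add, smul_add, smul_sub]
  abel
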